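/- Fix n ≥ 3, 1 < μ < 2 and 0 < δ < 1, and let r₁ > 0 be sufficiently small. For 0 < ε < 1 define v_ε(r) = (ε r^{−μ+1} + 1 − r^{δ})^{(n−2)/(μ−1)} on 0 < r < r₁, and set χ₁ = −(2/(n−2)) v_ε^{-1} v_ε'/r − (2/(n−2)²) v_ε^{-2} (v_ε')², χ₂ = (2/(n−2)) v_ε^{-1}(v_ε'' − v_ε'/r) − (2n/(n−2)²) v_ε^{-2}(v_ε')². Then χ₁ > 0 on (0, r₁), and moreover χ₂ − (μ+1)χ₁ = −2δ(μ−1+δ) / ((μ−1) r^{2−δ} (ε r^{−μ+1} + 1 − r^{δ})) < 0. -/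

import Mathlib

private lemma stmt_15_alg1 (nn μ V W W1 r : ℝ) (hN : nn - 2 ≠ 0) (hm : μ - 1 ≠ 0)
    (hV : V ≠ 0) (hW : W ≠ 0) (hr : r ≠ 0) :
    -(2/(nn-2)) * V⁻¹ * ((nn-2)/(μ-1) * (V/W) * W1)/r -
      (2/(nn-2)^2) * (V^2)⁻¹ * ((nn-2)/(μ-1) * (V/W) * W1)^2
    = (-2*W1) * ((μ-1)*W + W1*r) / ((μ-1)^2 * W^2 * r) := by
  field_simp
  ring

set_option maxHeartbeats 1000000 in
private lemma stmt_15_alg2 (nn μ V W W1 W2 r : ℝ) (hN : nn - 2 ≠ 0) (hm : μ - 1 ≠ 0)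
    (hV : V ≠ 0) (hW : W ≠ 0) (hr : r ≠ 0) :
    ((2/(nn-2)) * V⁻¹ * (((nn-2)/(μ-1) * (((nn-2)/(μ-1) - 1) * (V/W^2) * W1) * W1 +
        (nn-2)/(μ-1) * (V/W) * W2) - ((nn-2)/(μ-1) * (V/W) * W1)/r) -
      (2*nn/(nn-2)^2) * (V^2)⁻¹ * ((nn-2)/(μ-1) * (V/W) * W1)^2)
    - (μ+1) * (-(2/(nn-2)) * V⁻¹ * ((nn-2)/(μ-1) * (V/W) * W1)/r -
      (2/(nn-2)^2) * (V^2)⁻¹ * ((nn-2)/(μ-1)*(V/W)*W1)^2)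
    = 2*(W2*r + μ*W1)/((μ-1)*W*r) := by
  field_simp
  ring

private lemma stmt_15_alg3 (μ δ W F r e : ℝ) (hm : μ - 1 ≠ 0) (hW : W ≠ 0)
    (hF : F ≠ 0) (hr : r ≠ 0) :
    2*(-(δ*e)*(F*r))/((μ-1)*W*r) = -(2*δ*e)/((μ-1)*F⁻¹*W) := by
  field_simp

set_option maxHeartbeats 1000000 in
/-- Radial Schouten coefficients of the supersolution
`v_ε(r) = (ε r^{-μ+1} + 1 - r^δ)^{(n-2)/(μ-1)}` (Lemma A.2 computation):
for `1 < μ < 2`, `0 < δ < 1` there is `r₁ > 0` such that for all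
`ε ∈ (0,1)` and `r ∈ (0,r₁)` one has `χ₁ > 0` and
`χ₂ - (μ+1)χ₁ = -2δ(μ-1+δ)/((μ-1) r^{2-δ} (ε r^{-μ+1} + 1 - r^δ)) < 0`. -/
theorem stmt_15 (n : ℕ) (hn : 3 ≤ n) (μ δ : ℝ)
    (hμ1 : 1 < μ) (hμ2 : μ < 2) (hδ0 : 0 < δ) (hδ1 : δ < 1) :
    ∃ r₁ : ℝ, 0 < r₁ ∧
      ∀ ε ∈ Set.Ioo (0 : ℝ) 1, ∀ r ∈ Set.Ioo (0 : ℝ) r₁,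
        let v : ℝ → ℝ := fun s => (ε * s ^ (-μ + 1) + 1 - s ^ δ) ^ (((n : ℝ) - 2) / (μ - 1))
        let χ₁ : ℝ := -(2 / ((n : ℝ) - 2)) * (v r)⁻¹ * deriv v r / r -
          (2 / ((n : ℝ) - 2) ^ 2) * ((v r) ^ 2)⁻¹ * (deriv v r) ^ 2
        let χ₂ : ℝ := (2 / ((n : ℝ) - 2)) * (v r)⁻¹ * (deriv (deriv v) r - deriv v r / r) -
          (2 * (n : ℝ) / ((n : ℝ) - 2) ^ 2) * ((v r) ^ 2)⁻¹ * (deriv v r) ^ 2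
        0 < χ₁ ∧
        χ₂ - (μ + 1) * χ₁ =
          -(2 * δ * (μ - 1 + δ)) / ((μ - 1) * r ^ (2 - δ) * (ε * r ^ (-μ + 1) + 1 - r ^ δ)) ∧
        χ₂ - (μ + 1) * χ₁ < 0 := by
  have hμ0 : (0:ℝ) < μ - 1 := by linarith
  have hμδ : (0:ℝ) < μ - 1 + δ := by linarith
  have hb : (0:ℝ) < (μ - 1) / (μ - 1 + δ) := div_pos hμ0 hμδ
  have hb1 : (μ - 1) / (μ - 1 + δ) < 1 := by
    rw [div_lt_one hμδ]; linarith
  refine ⟨((μ - 1) / (μ - 1 + δ)) ^ (1/δ), Real.rpow_pos_of_pos hb _, ?_⟩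
  intro ε hε r hr
  intro v χ₁ χ₂
  have hr0 : 0 < r := hr.1
  have hrn : r ≠ 0 := hr0.ne'
  have hN : ((n:ℝ) - 2) ≠ 0 := by
    have : (3:ℝ) ≤ (n:ℝ) := by exact_mod_cast hn
    intro h; nlinarith
  set p : ℝ := ((n:ℝ) - 2) / (μ - 1) with hpdef
  -- key smallness of r^δ
  have hrδ : r ^ δ < (μ - 1) / (μ - 1 + δ) := by
    have h1 : r ^ δ < (((μ - 1) / (μ - 1 + δ)) ^ (1/δ)) ^ δ :=
      Real.rpow_lt_rpow hr0.le hr.2 hδ0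
    have h2 : (((μ - 1) / (μ - 1 + δ)) ^ (1/δ)) ^ δ = (μ - 1) / (μ - 1 + δ) := by
      rw [← Real.rpow_mul hb.le]
      rw [show (1/δ) * δ = 1 by field_simp]
      exact Real.rpow_one _
    rwa [h2] at h1
  have hrδ1 : r ^ δ < 1 := lt_trans hrδ hb1
  -- positivity of the base everywhere on the interval
  have hWpos : ∀ s ∈ Set.Ioo (0:ℝ) (((μ - 1) / (μ - 1 + δ)) ^ (1/δ)),
      0 < ε * s ^ (-μ + 1) + 1 - s ^ δ := by
    intro s hs
    have hs0 : 0 < s := hs.1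
    have hsδ : s ^ δ < (μ - 1) / (μ - 1 + δ) := by
      have h1 : s ^ δ < (((μ - 1) / (μ - 1 + δ)) ^ (1/δ)) ^ δ :=
        Real.rpow_lt_rpow hs0.le hs.2 hδ0
      have h2 : (((μ - 1) / (μ - 1 + δ)) ^ (1/δ)) ^ δ = (μ - 1) / (μ - 1 + δ) := by
        rw [← Real.rpow_mul hb.le]
        rw [show (1/δ) * δ = 1 by field_simp]
        exact Real.rpow_one _
      rwa [h2] at h1
    have hsδ1 : s ^ δ < 1 := lt_trans hsδ hb1
    have : 0 < ε * s ^ (-μ + 1) := mul_pos hε.1 (Real.rpow_pos_of_pos hs0 _)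
    linarith
  -- elementary power function derivatives
  have h1 : ∀ s : ℝ, 0 < s → HasDerivAt (fun t : ℝ => t ^ (-μ + 1)) ((1 - μ) * s ^ (-μ)) s := by
    intro s hs
    have h := Real.hasDerivAt_rpow_const (x := s) (p := -μ + 1) (Or.inl hs.ne')
    rw [show -μ + 1 - 1 = -μ by ring] at h
    convert h using 1; ring
  have h2 : ∀ s : ℝ, 0 < s → HasDerivAt (fun t : ℝ => t ^ δ) (δ * s ^ (δ - 1)) s := by
    intro s hs
    exact Real.hasDerivAt_rpow_const (x := s) (p := δ) (Or.inl hs.ne')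
  have h3 : ∀ s : ℝ, 0 < s → HasDerivAt (fun t : ℝ => t ^ (-μ)) ((-μ) * s ^ (-μ - 1)) s := by
    intro s hs
    exact Real.hasDerivAt_rpow_const (x := s) (p := -μ) (Or.inl hs.ne')
  have h4 : ∀ s : ℝ, 0 < s → HasDerivAt (fun t : ℝ => t ^ (δ - 1)) ((δ - 1) * s ^ (δ - 2)) s := by
    intro s hs
    have h := Real.hasDerivAt_rpow_const (x := s) (p := δ - 1) (Or.inl hs.ne')
    rw [show δ - 1 - 1 = δ - 2 by ring] at h
    exact h
  -- derivative of the base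
  have hwder : ∀ s : ℝ, 0 < s →
      HasDerivAt (fun t : ℝ => ε * t ^ (-μ + 1) + 1 - t ^ δ)
        (ε * (1 - μ) * s ^ (-μ) - δ * s ^ (δ - 1)) s := by
    intro s hs
    have := (((h1 s hs).const_mul ε).add_const 1).sub (h2 s hs)
    exact this.congr_deriv (by ring)
  -- first derivative of v
  have hder : ∀ s ∈ Set.Ioo (0:ℝ) (((μ - 1) / (μ - 1 + δ)) ^ (1/δ)),
      HasDerivAt v (p * (ε * s ^ (-μ + 1) + 1 - s ^ δ) ^ (p - 1) *
        (ε * (1 - μ) * s ^ (-μ) - δ * s ^ (δ - 1))) s := by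
    intro s hs
    have hout := Real.hasDerivAt_rpow_const (x := ε * s ^ (-μ + 1) + 1 - s ^ δ) (p := p)
      (Or.inl (hWpos s hs).ne')
    exact hout.comp s (hwder s hs.1)
  set W : ℝ := ε * r ^ (-μ + 1) + 1 - r ^ δ with hWdef
  set W1 : ℝ := ε * (1 - μ) * r ^ (-μ) - δ * r ^ (δ - 1) with hW1def
  set W2 : ℝ := ε * (1 - μ) * (-μ) * r ^ (-μ - 1) - δ * (δ - 1) * r ^ (δ - 2) with hW2def
  have hWr : 0 < W := hWpos r hr
  have hD1 : deriv v r = p * W ^ (p - 1) * W1 := (hder r hr).deriv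
  -- second derivative
  have hD2 : deriv (deriv v) r = p * ((p - 1) * W ^ (p - 1 - 1) * W1) * W1 +
      p * W ^ (p - 1) * W2 := by
    have hev : deriv v =ᶠ[nhds r] fun s => p * (ε * s ^ (-μ + 1) + 1 - s ^ δ) ^ (p - 1) *
        (ε * (1 - μ) * s ^ (-μ) - δ * s ^ (δ - 1)) := by
      filter_upwards [isOpen_Ioo.eventually_mem hr] with s hs using (hder s hs).deriv
    rw [hev.deriv_eq]
    have houter : HasDerivAt (fun s : ℝ => (ε * s ^ (-μ + 1) + 1 - s ^ δ) ^ (p - 1))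
        ((p - 1) * W ^ (p - 1 - 1) * W1) r := by
      have := (Real.hasDerivAt_rpow_const (x := W) (p := p - 1) (Or.inl hWr.ne')).comp r
        (hwder r hr0)
      exact this
    have hinner : HasDerivAt (fun s : ℝ => ε * (1 - μ) * s ^ (-μ) - δ * s ^ (δ - 1)) W2 r := by
      have := ((h3 r hr0).const_mul (ε * (1 - μ))).sub ((h4 r hr0).const_mul δ)
      exact this.congr_deriv (by rw [hW2def]; ring)
    have := (houter.const_mul p).mul hinner
    have h' := this.deriv
    exact h'
  -- power bookkeeping
  have hVr : v r = W ^ p := rfl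
  have hVpos : 0 < W ^ p := Real.rpow_pos_of_pos hWr _
  have hWp1 : W ^ (p - 1) = W ^ p / W := by
    rw [Real.rpow_sub hWr, Real.rpow_one]
  have hWp2 : W ^ (p - 1 - 1) = W ^ p / W ^ 2 := by
    rw [show p - 1 - 1 = p - (2:ℕ) by push_cast; ring, Real.rpow_sub hWr, Real.rpow_natCast]
  -- rpow atom relations
  have ha : r ^ (-μ + 1) = r ^ (-μ) * r := Real.rpow_add_one hrn (-μ)
  have hc : r ^ (-μ) = r ^ (-μ - 1) * r := by
    have := Real.rpow_add_one hrn (-μ - 1)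
    rw [show -μ - 1 + 1 = -μ by ring] at this
    exact this
  have hbb : r ^ δ = r ^ (δ - 1) * r := by
    have := Real.rpow_add_one hrn (δ - 1)
    rw [show δ - 1 + 1 = δ by ring] at this
    exact this
  have hdd : r ^ (δ - 1) = r ^ (δ - 2) * r := by
    have := Real.rpow_add_one hrn (δ - 2)
    rw [show δ - 2 + 1 = δ - 1 by ring] at this
    exact this
  have hf2 : r ^ (2 - δ) = (r ^ (δ - 2))⁻¹ := by
    rw [show (2 - δ) = -(δ - 2) by ring, Real.rpow_neg hr0.le]
  have hEpos : 0 < r ^ (-μ - 1) := Real.rpow_pos_of_pos hr0 _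
  have hFpos : 0 < r ^ (δ - 2) := Real.rpow_pos_of_pos hr0 _
  -- sign facts
  have hW1neg : W1 < 0 := by
    rw [hW1def]
    have t1 : ε * (1 - μ) * r ^ (-μ) < 0 := by
      have : ε * (1 - μ) < 0 := mul_neg_of_pos_of_neg hε.1 (by linarith)
      exact mul_neg_of_neg_of_pos this (Real.rpow_pos_of_pos hr0 _)
    have t2 : 0 < δ * r ^ (δ - 1) := mul_pos hδ0 (Real.rpow_pos_of_pos hr0 _)
    linarith
  have hsum : 0 < (μ - 1) * W + W1 * r := by
    have key : (μ - 1) * W + W1 * r = (μ - 1) - (μ - 1 + δ) * r ^ δ := by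
      rw [hWdef, hW1def, ha, hbb]; ring
    rw [key]
    have : (μ - 1 + δ) * r ^ δ < (μ - 1 + δ) * ((μ - 1) / (μ - 1 + δ)) :=
      (mul_lt_mul_iff_right₀ hμδ).2 hrδ
    rw [mul_div_cancel₀ _ hμδ.ne'] at this
    linarith
  -- χ₁ positivity
  have hchi1 : 0 < χ₁ := by
    show 0 < -(2 / ((n : ℝ) - 2)) * (v r)⁻¹ * deriv v r / r -
      (2 / ((n : ℝ) - 2) ^ 2) * ((v r) ^ 2)⁻¹ * (deriv v r) ^ 2
    rw [hVr, hD1, hWp1, hpdef,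
      stmt_15_alg1 ((n:ℝ)) μ (W ^ (((n:ℝ) - 2) / (μ - 1))) W W1 r hN hμ0.ne'
        hVpos.ne' hWr.ne' hrn]
    apply div_pos
    · exact mul_pos (by linarith) hsum
    · positivity
  -- the identity for χ₂ - (μ+1)χ₁
  have hEq : χ₂ - (μ + 1) * χ₁ =
      -(2 * δ * (μ - 1 + δ)) / ((μ - 1) * r ^ (2 - δ) * W) := by
    show ((2 / ((n : ℝ) - 2)) * (v r)⁻¹ * (deriv (deriv v) r - deriv v r / r) -
        (2 * (n : ℝ) / ((n : ℝ) - 2) ^ 2) * ((v r) ^ 2)⁻¹ * (deriv v r) ^ 2) -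
        (μ + 1) * (-(2 / ((n : ℝ) - 2)) * (v r)⁻¹ * deriv v r / r -
        (2 / ((n : ℝ) - 2) ^ 2) * ((v r) ^ 2)⁻¹ * (deriv v r) ^ 2) =
        -(2 * δ * (μ - 1 + δ)) / ((μ - 1) * r ^ (2 - δ) * W)
    have hK : W2 * r + μ * W1 = -(δ * (μ - 1 + δ)) * (r ^ (δ - 2) * r) := by
      rw [hW2def, hW1def, hc, hdd]; ring
    rw [hVr, hD1, hD2, hWp1, hWp2, hf2, hpdef,
      stmt_15_alg2 ((n:ℝ)) μ (W ^ (((n:ℝ) - 2) / (μ - 1))) W W1 W2 r hN hμ0.ne'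
        hVpos.ne' hWr.ne' hrn, hK]
    exact stmt_15_alg3 μ δ W (r ^ (δ - 2)) r (μ - 1 + δ) hμ0.ne' hWr.ne' hFpos.ne' hrn
  refine ⟨hchi1, hEq, ?_⟩
  rw [hEq]
  apply div_neg_of_neg_of_pos
  · have : 0 < 2 * δ * (μ - 1 + δ) := by positivity
    linarith
  · exact mul_pos (mul_pos hμ0 (Real.rpow_pos_of_pos hr0 _)) hWr
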